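/- Suppose ‖Δ_A‖_{∞→∞} ≤ ε_A, ‖Δ_B‖_{∞→∞} ≤ ε_B, and ‖w_t‖_∞ ≤ σ_w for 0 ≤ t ≤ T−1, and suppose the reals σ_0,…,σ_{T−1} > 0 satisfy: ε_A‖Φ̃x^{0,0}x_0‖_∞ + ε_B‖Φ̃u^{0,0}x_0‖_∞ + σ_w ≤ σ_0, and for each 1 ≤ t ≤ T−1, ε_A(‖Φ̃x^{t,t}x_0‖_∞ + Σ_{i=1}^{t} ‖Φ̃x^{t,t−i}‖_{∞→∞}) + ε_B(‖Φ̃u^{t,t}x_0‖_∞ + Σ_{i=1}^{t} ‖Φ̃u^{t,t−i}‖_{∞→∞}) + σ_w ≤ σ_t. Define recursively, for 0 ≤ t ≤ T−1: x_t = Φ̃x^{t,t}x_0 + Σ_{i=1}^{t} Φ̃x^{t,t−i} w̃_{i−1}, u_t = Φ̃u^{t,t}x_0 + Σ_{i=1}^{t} Φ̃u^{t,t−i} w̃_{i−1}, η_t = Δ_A x_t + Δ_B u_t + w_t, and w̃_t = σ_t^{−1} η_t. Then ‖η_t‖_∞ ≤ σ_t for all 0 ≤ t ≤ T−1. -/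

import Mathlib

open Matrix Finset

noncomputable section

/-- The ℓ¹ norm of a vector in `ℝⁿ`: `‖v‖₁ = ∑ i, |v i|`.
(The ℓ∞ norm is the default norm `‖·‖` on `Fin n → ℝ`.) -/
def norm1 {n : ℕ} (v : Fin n → ℝ) : ℝ := ∑ i, |v i|

/-- The operator norm `‖M‖_{∞→∞}` induced by the sup norm, i.e. the maximum
absolute row sum. -/
def opInf {n m : ℕ} (M : Matrix (Fin n) (Fin m) ℝ) : ℝ := ⨆ i, ∑ j, |M i j|

lemma row_le_opInf {n m : ℕ} (M : Matrix (Fin n) (Fin m) ℝ) (i : Fin n) :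
    ∑ j, |M i j| ≤ opInf M :=
  le_ciSup (f := fun i => ∑ j, |M i j|) (Set.Finite.bddAbove (Set.finite_range _)) i

lemma opInf_nonneg {n m : ℕ} (hn : 0 < n) (M : Matrix (Fin n) (Fin m) ℝ) :
    0 ≤ opInf M := by
  have i : Fin n := ⟨0, hn⟩
  exact le_trans (Finset.sum_nonneg fun j _ => abs_nonneg _) (row_le_opInf M i)

lemma mulVec_norm_le {n m : ℕ} (hn : 0 < n) (M : Matrix (Fin n) (Fin m) ℝ)
    (v : Fin m → ℝ) : ‖M.mulVec v‖ ≤ opInf M * ‖v‖ := by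
  have hrhs : 0 ≤ opInf M * ‖v‖ := mul_nonneg (opInf_nonneg hn M) (norm_nonneg v)
  rw [pi_norm_le_iff_of_nonneg hrhs]
  intro i
  rw [Real.norm_eq_abs]
  calc |M.mulVec v i| = |∑ j, M i j * v j| := rfl
    _ ≤ ∑ j, |M i j * v j| := Finset.abs_sum_le_sum_abs _ _
    _ = ∑ j, |M i j| * |v j| := by simp [abs_mul]
    _ ≤ ∑ j, |M i j| * ‖v‖ := by
        refine Finset.sum_le_sum fun j _ => ?_
        exact mul_le_mul_of_nonneg_left ((Real.norm_eq_abs _ ▸ norm_le_pi_norm v j)) (abs_nonneg _)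
    _ = (∑ j, |M i j|) * ‖v‖ := by rw [Finset.sum_mul]
    _ ≤ opInf M * ‖v‖ := mul_le_mul_of_nonneg_right (row_le_opInf M i) (norm_nonneg v)

theorem statement5 (nx nu T : ℕ) (hnx : 1 ≤ nx) (hnu : 1 ≤ nu) (hT : 1 ≤ T)
    (εA εB σw : ℝ) (hεA : 0 ≤ εA) (hεB : 0 ≤ εB) (hσw : 0 ≤ σw)
    (x0 : Fin nx → ℝ)
    (ΔA : Matrix (Fin nx) (Fin nx) ℝ) (ΔB : Matrix (Fin nx) (Fin nu) ℝ)
    (w : ℕ → Fin nx → ℝ)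
    (Phix : ℕ → ℕ → Matrix (Fin nx) (Fin nx) ℝ)
    (Phiu : ℕ → ℕ → Matrix (Fin nu) (Fin nx) ℝ)
    (σ : ℕ → ℝ) (hσ : ∀ t < T, 0 < σ t)
    (hΔA : opInf ΔA ≤ εA) (hΔB : opInf ΔB ≤ εB)
    (hw : ∀ t < T, ‖w t‖ ≤ σw)
    (hσ0 : εA * ‖(Phix 0 0).mulVec x0‖ + εB * ‖(Phiu 0 0).mulVec x0‖ + σw ≤ σ 0)
    (hσt : ∀ t, 1 ≤ t → t < T →
      εA * (‖(Phix t t).mulVec x0‖ + ∑ i ∈ Icc 1 t, opInf (Phix t (t - i))) +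
        εB * (‖(Phiu t t).mulVec x0‖ + ∑ i ∈ Icc 1 t, opInf (Phiu t (t - i))) + σw ≤ σ t)
    (x : ℕ → Fin nx → ℝ) (u : ℕ → Fin nu → ℝ) (η : ℕ → Fin nx → ℝ) (wt : ℕ → Fin nx → ℝ)
    (hx : ∀ t < T, x t =
      (Phix t t).mulVec x0 + ∑ i ∈ Icc 1 t, (Phix t (t - i)).mulVec (wt (i - 1)))
    (hu : ∀ t < T, u t =
      (Phiu t t).mulVec x0 + ∑ i ∈ Icc 1 t, (Phiu t (t - i)).mulVec (wt (i - 1)))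
    (hη : ∀ t < T, η t = ΔA.mulVec (x t) + ΔB.mulVec (u t) + w t)
    (hwt : ∀ t < T, wt t = (σ t)⁻¹ • η t) :
    ∀ t < T, ‖η t‖ ≤ σ t := by
  intro t
  induction t using Nat.strong_induction_on with
  | _ t IH =>
  intro ht
  -- bound on past disturbances
  have hb : ∀ s, s < t → ‖wt s‖ ≤ 1 := by
    intro s hs
    have hsT : s < T := lt_trans hs ht
    have hσs := hσ s hsT
    rw [hwt s hsT, norm_smul, Real.norm_eq_abs, abs_of_pos (inv_pos.2 hσs)]
    calc (σ s)⁻¹ * ‖η s‖ ≤ (σ s)⁻¹ * σ s :=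
          mul_le_mul_of_nonneg_left (IH s hs hsT) (le_of_lt (inv_pos.2 hσs))
      _ = 1 := inv_mul_cancel₀ (ne_of_gt hσs)
  have hsumx : ‖x t‖ ≤ ‖(Phix t t).mulVec x0‖ + ∑ i ∈ Icc 1 t, opInf (Phix t (t - i)) := by
    rw [hx t ht]
    refine (norm_add_le _ _).trans (add_le_add_right ?_ _)
    refine (norm_sum_le _ _).trans (Finset.sum_le_sum fun i hi => ?_)
    obtain ⟨hi1, hi2⟩ := Finset.mem_Icc.mp hi
    have hlt : i - 1 < t := by omega
    calc ‖(Phix t (t - i)).mulVec (wt (i - 1))‖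
        ≤ opInf (Phix t (t - i)) * ‖wt (i - 1)‖ := mulVec_norm_le hnx _ _
      _ ≤ opInf (Phix t (t - i)) * 1 :=
          mul_le_mul_of_nonneg_left (hb _ hlt) (opInf_nonneg hnx _)
      _ = opInf (Phix t (t - i)) := mul_one _
  have hsumu : ‖u t‖ ≤ ‖(Phiu t t).mulVec x0‖ + ∑ i ∈ Icc 1 t, opInf (Phiu t (t - i)) := by
    rw [hu t ht]
    refine (norm_add_le _ _).trans (add_le_add_right ?_ _)
    refine (norm_sum_le _ _).trans (Finset.sum_le_sum fun i hi => ?_)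
    obtain ⟨hi1, hi2⟩ := Finset.mem_Icc.mp hi
    have hlt : i - 1 < t := by omega
    calc ‖(Phiu t (t - i)).mulVec (wt (i - 1))‖
        ≤ opInf (Phiu t (t - i)) * ‖wt (i - 1)‖ := mulVec_norm_le hnu _ _
      _ ≤ opInf (Phiu t (t - i)) * 1 :=
          mul_le_mul_of_nonneg_left (hb _ hlt) (opInf_nonneg hnu _)
      _ = opInf (Phiu t (t - i)) := mul_one _
  have hηb : ‖η t‖ ≤ εA * ‖x t‖ + εB * ‖u t‖ + σw := by
    rw [hη t ht]
    calc ‖ΔA.mulVec (x t) + ΔB.mulVec (u t) + w t‖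
        ≤ ‖ΔA.mulVec (x t) + ΔB.mulVec (u t)‖ + ‖w t‖ := norm_add_le _ _
      _ ≤ ‖ΔA.mulVec (x t)‖ + ‖ΔB.mulVec (u t)‖ + ‖w t‖ :=
          add_le_add_left (norm_add_le _ _) _
      _ ≤ εA * ‖x t‖ + εB * ‖u t‖ + σw := by
          gcongr
          · exact (mulVec_norm_le hnx _ _).trans
              (mul_le_mul_of_nonneg_right hΔA (norm_nonneg _))
          · exact (mulVec_norm_le hnx _ _).trans
              (mul_le_mul_of_nonneg_right hΔB (norm_nonneg _))
          · exact hw t ht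
  rcases Nat.eq_zero_or_pos t with rfl | ht1
  · simp only [Finset.Icc_self, Icc_eq_empty_of_lt Nat.zero_lt_one, Finset.sum_empty,
      add_zero] at hsumx hsumu
    calc ‖η 0‖ ≤ εA * ‖x 0‖ + εB * ‖u 0‖ + σw := hηb
      _ ≤ εA * ‖(Phix 0 0).mulVec x0‖ + εB * ‖(Phiu 0 0).mulVec x0‖ + σw := by gcongr
      _ ≤ σ 0 := hσ0
  · calc ‖η t‖ ≤ εA * ‖x t‖ + εB * ‖u t‖ + σw := hηb
      _ ≤ εA * (‖(Phix t t).mulVec x0‖ + ∑ i ∈ Icc 1 t, opInf (Phix t (t - i))) +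
          εB * (‖(Phiu t t).mulVec x0‖ + ∑ i ∈ Icc 1 t, opInf (Phiu t (t - i))) + σw := by
          gcongr
      _ ≤ σ t := hσt t ht1 ht
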